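/- Let R be a word rewriting system over Σ and L_R the associated strictly positive logic. Then for all words A, B ∈ Σ*, the sequent Ap ⊢ Bp is provable in L_R if and only if A ↠_R B. In particular the translation from semi-Thue systems to strictly positive logics is faithful. -/

import Mathlib

/-- Strictly positive formulas over signature `α` and variables `V`. -/
inductive SPF (α V : Type) : Type
  | var : V → SPF α V
  | top : SPF α V
  | and : SPF α V → SPF α V → SPF α V
  | dia : α → SPF α V → SPF α V
  deriving DecidableEq

namespace SPF

/-- Simultaneous substitution. -/
def subst {α V : Type} (σ : V → SPF α V) : SPF α V → SPF α V
  | var v => σ v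
  | top => top
  | and A B => and (A.subst σ) (B.subst σ)
  | dia a A => dia a (A.subst σ)

/-- `C.substVar p A` is `C[A/p]`: replace all occurrences of variable `p` in `C` by `A`. -/
def substVar {α V : Type} [DecidableEq V] (C : SPF α V) (p : V) (A : SPF α V) : SPF α V :=
  C.subst (fun v => if v = p then A else var v)

/-- `⊤` does not occur. -/
def noTop {α V : Type} : SPF α V → Prop
  | var _ => True
  | top => False
  | and A B => noTop A ∧ noTop B
  | dia _ A => noTop A

/-- Contains at least one conjunction. -/
def hasAnd {α V : Type} : SPF α V → Prop
  | var _ => False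
  | top => False
  | and _ _ => True
  | dia _ A => hasAnd A

end SPF

/-- A word `W ∈ Σ*` applied to a formula as a sequence of diamonds. -/
def wApp {α V : Type} (W : List α) (F : SPF α V) : SPF α V :=
  W.foldr (fun a G => SPF.dia a G) F

/-- Sequent calculus over `K⁺` with extra axiom set `Ax`.  `Der ∅` is exactly `K⁺`. -/
inductive Der {α V : Type} (Ax : Set (SPF α V × SPF α V)) : SPF α V → SPF α V → Prop
  | id (A) : Der Ax A A
  | top (A) : Der Ax A SPF.top
  | cut {A B C} : Der Ax A B → Der Ax B C → Der Ax A C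
  | andE1 (A B) : Der Ax (SPF.and A B) A
  | andE2 (A B) : Der Ax (SPF.and A B) B
  | andI {A B C} : Der Ax A B → Der Ax A C → Der Ax A (SPF.and B C)
  | mono (a) {A B} : Der Ax A B → Der Ax (SPF.dia a A) (SPF.dia a B)
  | ax {A B} : (A, B) ∈ Ax → Der Ax A B

/-- Normal strictly positive logic: a set of sequents containing `K⁺`,
closed under its rules and under substitution. -/
structure SPNormal {α V : Type} (P : Set (SPF α V × SPF α V)) : Prop where
  kp : ∀ A B : SPF α V, Der ∅ A B → (A, B) ∈ P
  cut : ∀ A B C : SPF α V, (A, B) ∈ P → (B, C) ∈ P → (A, C) ∈ P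
  andI : ∀ A B C : SPF α V, (A, B) ∈ P → (A, C) ∈ P → (A, SPF.and B C) ∈ P
  mono : ∀ (a : α) (A B : SPF α V), (A, B) ∈ P → (SPF.dia a A, SPF.dia a B) ∈ P
  substC : ∀ (σ : V → SPF α V) (A B : SPF α V), (A, B) ∈ P → (A.subst σ, B.subst σ) ∈ P

/-- Modal formulas. -/
inductive MF (α V : Type) : Type
  | var : V → MF α V
  | bot : MF α V
  | imp : MF α V → MF α V → MF α V
  | dia : α → MF α V → MF α V

namespace MF

def neg {α V : Type} (A : MF α V) : MF α V := imp A bot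
def box {α V : Type} (a : α) (A : MF α V) : MF α V := neg (dia a (neg A))
def mand {α V : Type} (A B : MF α V) : MF α V := neg (imp A (neg B))

def subst {α V : Type} (σ : V → MF α V) : MF α V → MF α V
  | var v => σ v
  | bot => bot
  | imp A B => imp (A.subst σ) (B.subst σ)
  | dia a A => dia a (A.subst σ)

end MF

/-- Normal modal logic (Hilbert-style closure conditions). -/
structure MNormal {α V : Type} (L : Set (MF α V)) : Prop where
  k1 : ∀ A B : MF α V, MF.imp A (MF.imp B A) ∈ L
  k2 : ∀ A B C : MF α V,
    MF.imp (MF.imp A (MF.imp B C)) (MF.imp (MF.imp A B) (MF.imp A C)) ∈ L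
  dne : ∀ A : MF α V, MF.imp (MF.neg (MF.neg A)) A ∈ L
  kax : ∀ (a : α) (A B : MF α V),
    MF.imp (MF.box a (MF.imp A B)) (MF.imp (MF.box a A) (MF.box a B)) ∈ L
  mp : ∀ A B : MF α V, MF.imp A B ∈ L → A ∈ L → B ∈ L
  nec : ∀ (a : α) (A : MF α V), A ∈ L → MF.box a A ∈ L
  substC : ∀ (σ : V → MF α V) (A : MF α V), A ∈ L → A.subst σ ∈ L

/-- Translation of strictly positive formulas into modal formulas. -/
def toMF {α V : Type} : SPF α V → MF α V
  | SPF.var v => MF.var v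
  | SPF.top => MF.neg MF.bot
  | SPF.and A B => MF.mand (toMF A) (toMF B)
  | SPF.dia a A => MF.dia a (toMF A)

/-- `𝒫(L)`: the strictly positive fragment of a modal logic `L`. -/
def Pfrag {α V : Type} (L : Set (MF α V)) : Set (SPF α V × SPF α V) :=
  {x | MF.imp (toMF x.1) (toMF x.2) ∈ L}

/-- `ℳ(P)`: the least normal modal logic containing all implications `A → B`
for sequents `(A, B) ∈ P`. -/
def Mop {α V : Type} (P : Set (SPF α V × SPF α V)) : Set (MF α V) :=
  ⋂₀ {L | MNormal L ∧ ∀ x ∈ P, MF.imp (toMF x.1) (toMF x.2) ∈ L}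

/-- Contexts: strictly positive formulas with exactly one occurrence of a hole. -/
inductive Ctx (α V : Type) : Type
  | hole : Ctx α V
  | andL : Ctx α V → SPF α V → Ctx α V
  | andR : SPF α V → Ctx α V → Ctx α V
  | dia : α → Ctx α V → Ctx α V

/-- Plugging a formula into a context. -/
def Ctx.fill {α V : Type} : Ctx α V → SPF α V → SPF α V
  | Ctx.hole, F => F
  | Ctx.andL C B, F => SPF.and (C.fill F) B
  | Ctx.andR A C, F => SPF.and A (C.fill F)
  | Ctx.dia a C, F => SPF.dia a (C.fill F)

/-- Deep inference rules (before placing in a context).  `useTop` governs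
whether the `⊤`-rule `A ⟹ ⊤` is available. -/
inductive DIRule {α V : Type} (Ax : Set (SPF α V × SPF α V)) (useTop : Bool) :
    SPF α V → SPF α V → Prop
  | dup (A) : DIRule Ax useTop A (SPF.and A A)
  | andE1 (A B) : DIRule Ax useTop (SPF.and A B) A
  | andE2 (A B) : DIRule Ax useTop (SPF.and A B) B
  | top (A) : useTop = true → DIRule Ax useTop A SPF.top
  | ax {A B} : (A, B) ∈ Ax → DIRule Ax useTop A B

/-- One deep-inference step: a rule applied within a context. -/
def DStep {α V : Type} (Ax : Set (SPF α V × SPF α V)) (useTop : Bool)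
    (A B : SPF α V) : Prop :=
  ∃ (C : Ctx α V) (F G : SPF α V), DIRule Ax useTop F G ∧ A = C.fill F ∧ B = C.fill G

/-- Derivability in the deep inference system: `B` derivable from `A`. -/
def Deriv {α V : Type} (Ax : Set (SPF α V × SPF α V)) (useTop : Bool) :
    SPF α V → SPF α V → Prop :=
  Relation.ReflTransGen (DStep Ax useTop)

/-- One rewriting step of a semi-Thue system `R`. -/
def RStep {α : Type} (R : Set (List α × List α)) (w₁ w₂ : List α) : Prop :=
  ∃ X U V Y, (U, V) ∈ R ∧ w₁ = X ++ U ++ Y ∧ w₂ = X ++ V ++ Y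

/-- `A ↠_R B`: the rewriting relation of a semi-Thue system. -/
def Rewrites {α : Type} (R : Set (List α × List α)) : List α → List α → Prop :=
  Relation.ReflTransGen (RStep R)

/-- Axioms of the logic `L_R` of a word rewriting system `R`:
all substitution instances `UC ⊢ VC` of the axioms `Up ⊢ Vp`, for rules `U ↦ V` of `R`. -/
def DAx {α V : Type} (R : Set (List α × List α)) : Set (SPF α V × SPF α V) :=
  {x | ∃ (U W : List α) (C : SPF α V), (U, W) ∈ R ∧ x = (wApp U C, wApp W C)}

/-- Closure of a set of sequents under substitution (axiom schemata). -/
def substClosure {α V : Type} (S : Set (SPF α V × SPF α V)) :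
    Set (SPF α V × SPF α V) :=
  {x | ∃ (A B : SPF α V) (σ : V → SPF α V), (A, B) ∈ S ∧ x = (A.subst σ, B.subst σ)}

/-- An (injective) Gödel numbering of strictly positive formulas over `Σ = Bool`. -/
def encSPF : SPF Bool ℕ → ℕ
  | SPF.var v => Nat.pair 0 v
  | SPF.top => Nat.pair 1 0
  | SPF.and A B => Nat.pair 2 (Nat.pair (encSPF A) (encSPF B))
  | SPF.dia a A => Nat.pair 3 (Nat.pair (cond a 1 0) (encSPF A))


section Aux
variable {α V : Type} {R : Set (List α × List α)}

lemma rewrites_append_left (X : List α) {w v : List α} (h : Rewrites R w v) :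
    Rewrites R (X ++ w) (X ++ v) := by
  induction h with
  | refl => exact Relation.ReflTransGen.refl
  | tail _ hs ih =>
    refine ih.tail ?_
    obtain ⟨X', U, W, Y, hUW, rfl, rfl⟩ := hs
    exact ⟨X ++ X', U, W, Y, hUW, by simp, by simp⟩

/-- Semantics over words. -/
def sat (R : Set (List α × List α)) (val : V → List α → Prop) :
    SPF α V → List α → Prop
  | .var q, w => val q w
  | .top, _ => True
  | .and F G, w => sat R val F w ∧ sat R val G w
  | .dia a F, w => ∃ v, Rewrites R w (a :: v) ∧ sat R val F v

lemma sat_closed {val : V → List α → Prop}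
    (hval : ∀ q w v, Rewrites R w v → val q v → val q w)
    (F : SPF α V) {w v : List α} (h : Rewrites R w v) (hs : sat R val F v) :
    sat R val F w := by
  induction F generalizing w v with
  | var q => exact hval q w v h hs
  | top => trivial
  | and F G ihF ihG => exact ⟨ihF h hs.1, ihG h hs.2⟩
  | dia a F ih =>
    obtain ⟨u, hu, hsu⟩ := hs
    exact ⟨u, h.trans hu, hsu⟩

lemma sat_wApp {val : V → List α → Prop}
    (hval : ∀ q w v, Rewrites R w v → val q v → val q w)
    (U : List α) (C : SPF α V) (w : List α) :
    sat R val (wApp U C) w ↔ ∃ v, Rewrites R w (U ++ v) ∧ sat R val C v := by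
  induction U generalizing w with
  | nil =>
    simp only [wApp, List.foldr_nil, List.nil_append]
    constructor
    · exact fun h => ⟨w, Relation.ReflTransGen.refl, h⟩
    · rintro ⟨v, hv, hs⟩; exact sat_closed hval C hv hs
  | cons a U ih =>
    constructor
    · rintro ⟨v, hv, hs⟩
      obtain ⟨u, hu, hsu⟩ := (ih v).mp hs
      refine ⟨u, ?_, hsu⟩
      have := rewrites_append_left (R := R) [a] hu
      simpa [Rewrites] using hv.trans this
    · rintro ⟨v, hv, hs⟩
      refine ⟨U ++ v, by simpa using hv, ?_⟩
      exact (ih _).mpr ⟨v, Relation.ReflTransGen.refl, hs⟩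

lemma der_sound {val : V → List α → Prop}
    (hval : ∀ q w v, Rewrites R w v → val q v → val q w)
    {F G : SPF α V} (h : Der (DAx R) F G) :
    ∀ w, sat R val F w → sat R val G w := by
  induction h with
  | id A => exact fun w h => h
  | top A => exact fun w _ => trivial
  | cut _ _ ih1 ih2 => exact fun w h => ih2 w (ih1 w h)
  | andE1 A B => exact fun w h => h.1
  | andE2 A B => exact fun w h => h.2
  | andI _ _ ih1 ih2 => exact fun w h => ⟨ih1 w h, ih2 w h⟩
  | mono a _ ih => rintro w ⟨v, hv, hs⟩; exact ⟨v, hv, ih v hs⟩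
  | ax hAB =>
    obtain ⟨U, W, C, hUW, heq⟩ := hAB
    cases heq
    intro w hs
    obtain ⟨v, hv, hsv⟩ := (sat_wApp hval U C w).mp hs
    refine (sat_wApp hval W C w).mpr ⟨v, ?_, hsv⟩
    exact hv.tail ⟨[], U, W, v, hUW, by simp, by simp⟩

lemma der_wApp_mono {Ax : Set (SPF α V × SPF α V)} (X : List α) {F G : SPF α V}
    (h : Der Ax F G) : Der Ax (wApp X F) (wApp X G) := by
  induction X with
  | nil => exact h
  | cons a X ih => exact Der.mono a ih

lemma wApp_append (X Y : List α) (F : SPF α V) :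
    wApp (X ++ Y) F = wApp X (wApp Y F) := by
  simp [wApp, List.foldr_append]

end Aux

/-- Faithfulness: `Ap ⊢ Bp` is provable in `L_R` iff `A ↠_R B`. -/
theorem rewrites_iff_logic {α V : Type} (R : Set (List α × List α)) (p : V)
    (A B : List α) :
    Der (DAx R) (wApp A (SPF.var p)) (wApp B (SPF.var p)) ↔ Rewrites R A B := by
  constructor
  · intro h
    set val : V → List α → Prop := fun _ w => Rewrites R w [] with hval
    have hcl : ∀ q w v, Rewrites R w v → val q v → val q w :=
      fun q w v h1 h2 => h1.trans h2
    have hA : sat R val (wApp A (SPF.var p)) A := by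
      refine (sat_wApp hcl A _ A).mpr ⟨[], by rw [List.append_nil]; exact Relation.ReflTransGen.refl, Relation.ReflTransGen.refl⟩
    have hB := der_sound hcl h A hA
    obtain ⟨v, hv, hs⟩ := (sat_wApp hcl B _ A).mp hB
    have : Rewrites R (B ++ v) (B ++ []) := rewrites_append_left B hs
    simpa [Rewrites] using hv.trans this
  · intro h
    induction h with
    | refl => exact Der.id _
    | tail _ hs ih =>
      refine ih.cut ?_
      obtain ⟨X, U, W, Y, hUW, rfl, rfl⟩ := hs
      simp only [wApp_append]
      exact der_wApp_mono X (Der.ax ⟨U, W, wApp Y (SPF.var p), hUW, rfl⟩)
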